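/- Let r < 0 and c₁ < 0 (so that c₁r > 0 and c₁/(2r) > 0), and define on the open set V = {v ∈ ℝ : v² < c₁/(2r)} the function G(v) = ln(2rv² − c₁)/(4r) + √2·artanh(√2·r·v/√(c₁r))/(2√(c₁r)). Then for v ∈ V one has 2rv² − c₁ > 0 and |√2·r·v/√(c₁r)| < 1, G is differentiable on V with G'(v) = (v − 1)/(2rv² − c₁), and consequently: if φ : J → ℝ is differentiable on an open interval J with φ(ω) ∈ V and ω − G(φ(ω)) + c₂ = 0 for all ω ∈ J, then φ'(ω)·(φ(ω) − 1) = 2rφ(ω)² − c₁ on J. -/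

import Mathlib

open Real Set

noncomputable section

/-- The inverse hyperbolic tangent, defined for arguments of absolute value less than 1. -/
def artanh (x : ℝ) : ℝ := Real.log ((1 + x) / (1 - x)) / 2

lemma hasDerivAt_artanh {x : ℝ} (hx : |x| < 1) :
    HasDerivAt _root_.artanh (1 / (1 - x ^ 2)) x := by
  obtain ⟨hl, hu⟩ := abs_lt.1 hx
  have h1 : 0 < 1 + x := by linarith
  have h2 : 0 < 1 - x := by linarith
  have hf : HasDerivAt (fun y : ℝ => (1 + y) / (1 - y))
      ((1 * (1 - x) - (1 + x) * (-1)) / (1 - x) ^ 2) x :=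
    ((hasDerivAt_id x).const_add 1).div ((hasDerivAt_id x).const_sub 1) (by linarith)
  have hq : (0:ℝ) < (1 + x) / (1 - x) := div_pos h1 h2
  have := (hf.log hq.ne').div_const 2
  have h3 : (0:ℝ) < 1 - x ^ 2 := by nlinarith
  refine this.congr_deriv ?_
  field_simp
  ring

/-- formula (30). For `r < 0`, `c₁ < 0`, the function
`G(v) = ln(2rv² − c₁)/(4r) + √2·artanh(√2·r·v/√(c₁r))/(2√(c₁r))` is differentiable on
`V = {v : v² < c₁/(2r)}` with `G'(v) = (v−1)/(2rv²−c₁)`, and any differentiable `φ` with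
values in `V` satisfying `ω − G(φ(ω)) + c₂ = 0` obeys `φ'(φ−1) = 2rφ² − c₁`. -/
theorem implicit_solution_formula_30
    (r c₁ : ℝ) (hr : r < 0) (hc₁ : c₁ < 0)
    (V : Set ℝ) (hV : V = {v : ℝ | v ^ 2 < c₁ / (2 * r)})
    (G : ℝ → ℝ)
    (hGdef : ∀ v : ℝ, G v =
      Real.log (2 * r * v ^ 2 - c₁) / (4 * r)
        + Real.sqrt 2 * _root_.artanh (Real.sqrt 2 * r * v / Real.sqrt (c₁ * r))
            / (2 * Real.sqrt (c₁ * r))) :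
    (∀ v ∈ V, 0 < 2 * r * v ^ 2 - c₁
      ∧ |Real.sqrt 2 * r * v / Real.sqrt (c₁ * r)| < 1)
    ∧ (∀ v ∈ V, HasDerivAt G ((v - 1) / (2 * r * v ^ 2 - c₁)) v)
    ∧ ∀ (c₂ : ℝ) (J : Set ℝ), IsOpen J → J.OrdConnected →
        ∀ φ φ' : ℝ → ℝ, (∀ ω ∈ J, HasDerivAt φ (φ' ω) ω) →
          (∀ ω ∈ J, φ ω ∈ V) →
          (∀ ω ∈ J, ω - G (φ ω) + c₂ = 0) →
          ∀ ω ∈ J, φ' ω * (φ ω - 1) = 2 * r * (φ ω) ^ 2 - c₁ := by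
  have hcr : 0 < c₁ * r := mul_pos_of_neg_of_neg hc₁ hr
  set a : ℝ := Real.sqrt (c₁ * r) with ha
  have ha0 : 0 < a := Real.sqrt_pos.2 hcr
  have ha2 : a ^ 2 = c₁ * r := Real.sq_sqrt hcr.le
  have hs2 : (Real.sqrt 2) ^ 2 = 2 := Real.sq_sqrt (by norm_num)
  have hs2pos : 0 < Real.sqrt 2 := Real.sqrt_pos.2 (by norm_num)
  -- part 1
  have key : ∀ v ∈ V, 0 < 2 * r * v ^ 2 - c₁
      ∧ |Real.sqrt 2 * r * v / a| < 1 := by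
    intro v hv
    rw [hV] at hv
    have hv' : v ^ 2 < c₁ / (2 * r) := hv
    have hq : c₁ / (2 * r) * (2 * r) = c₁ := div_mul_cancel₀ _ (by linarith)
    have hD : 0 < 2 * r * v ^ 2 - c₁ := by
      nlinarith [mul_pos (show (0:ℝ) < -(2*r) by linarith) (sub_pos.2 hv')]
    refine ⟨hD, ?_⟩
    have hx : (Real.sqrt 2 * r * v) ^ 2 = 2 * r ^ 2 * v ^ 2 := by
      rw [mul_pow, mul_pow, hs2]
    have h1 : (Real.sqrt 2 * r * v) ^ 2 < a ^ 2 := by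
      rw [hx, ha2]
      nlinarith [mul_pos hD (neg_pos.2 hr)]
    have h2 : |Real.sqrt 2 * r * v| < a := by
      nlinarith [sq_abs (Real.sqrt 2 * r * v), abs_nonneg (Real.sqrt 2 * r * v)]
    rw [abs_div, abs_of_pos ha0, div_lt_one ha0]
    exact h2
  have hGd : ∀ v ∈ V, HasDerivAt G ((v - 1) / (2 * r * v ^ 2 - c₁)) v := by
    intro v hv
    obtain ⟨hD, hu⟩ := key v hv
    have hDne : (2 * r * v ^ 2 - c₁) ≠ 0 := hD.ne'
    have hC : c₁ - 2 * r * v ^ 2 ≠ 0 := by intro h; apply hDne; linarith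
    have hx : (Real.sqrt 2 * r * v) ^ 2 = 2 * r ^ 2 * v ^ 2 := by
      rw [mul_pow, mul_pow, hs2]
    have hinner : HasDerivAt (fun w : ℝ => 2 * r * w ^ 2 - c₁) (4 * r * v) v := by
      have := ((hasDerivAt_pow 2 v).const_mul (2 * r)).sub_const c₁
      refine this.congr_deriv ?_; push_cast; ring
    have h1 : HasDerivAt (fun w : ℝ => Real.log (2 * r * w ^ 2 - c₁) / (4 * r))
        (4 * r * v / (2 * r * v ^ 2 - c₁) / (4 * r)) v :=
      (hinner.log hDne).div_const (4 * r)
    have hu' : HasDerivAt (fun w : ℝ => Real.sqrt 2 * r * w / a)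
        (Real.sqrt 2 * r * 1 / a) v :=
      ((hasDerivAt_id v).const_mul (Real.sqrt 2 * r)).div_const a
    have h2 : HasDerivAt (fun w : ℝ =>
        Real.sqrt 2 * _root_.artanh (Real.sqrt 2 * r * w / a) / (2 * a))
        (Real.sqrt 2 * (1 / (1 - (Real.sqrt 2 * r * v / a) ^ 2)
          * (Real.sqrt 2 * r * 1 / a)) / (2 * a)) v :=
      ((((hasDerivAt_artanh hu).comp v hu')).const_mul (Real.sqrt 2)).div_const (2 * a)
    have hG : HasDerivAt G (4 * r * v / (2 * r * v ^ 2 - c₁) / (4 * r)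
        + Real.sqrt 2 * (1 / (1 - (Real.sqrt 2 * r * v / a) ^ 2)
          * (Real.sqrt 2 * r * 1 / a)) / (2 * a)) v := by
      apply (h1.add h2).congr_of_eventuallyEq
      filter_upwards with w
      rw [hGdef w, Pi.add_apply]
    convert hG using 1
    have hone : 1 - (Real.sqrt 2 * r * v / a) ^ 2 = (c₁ - 2 * r * v ^ 2) / c₁ := by
      rw [div_pow, hx, ha2]
      field_simp [hc₁.ne]
    rw [hone, one_div_div, show c₁ - 2 * r * v ^ 2 = -(2 * r * v ^ 2 - c₁) by ring]
    field_simp [hDne, hC, hr.ne, ha0.ne']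
    ring_nf
    rw [hs2, ha2]
    ring
  refine ⟨key, hGd, ?_⟩
  · -- implicit differentiation
    intro c₂ J hJopen _ φ φ' hφ hφV hrel ω hω
    obtain ⟨hD, _⟩ := key (φ ω) (hφV ω hω)
    have hDne : (2 * r * (φ ω) ^ 2 - c₁) ≠ 0 := hD.ne'
    have hG' : HasDerivAt G ((φ ω - 1) / (2 * r * (φ ω) ^ 2 - c₁)) (φ ω) :=
      hGd (φ ω) (hφV ω hω)
    have hh : HasDerivAt (fun t => t - G (φ t) + c₂)
        (1 - (φ ω - 1) / (2 * r * (φ ω) ^ 2 - c₁) * φ' ω) ω :=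
      ((hasDerivAt_id ω).sub (hG'.comp ω (hφ ω hω))).add_const c₂
    have h0 : HasDerivAt (fun t => t - G (φ t) + c₂) 0 ω := by
      apply (hasDerivAt_const ω (0:ℝ)).congr_of_eventuallyEq
      filter_upwards [hJopen.mem_nhds hω] with t ht
      exact hrel t ht
    have heq := hh.unique h0
    have h1 : (φ ω - 1) / (2 * r * (φ ω) ^ 2 - c₁) * φ' ω = 1 := by linarith
    rw [div_mul_eq_mul_div, div_eq_one_iff_eq hDne] at h1
    linarith


end
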